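/- Fix n > 1 and let B_k(t) be defined by B_0=B_1=1, B_k=B_{k-1}-t·B_{k-2}. Then the roots of B_n(t) are exactly t = 1/(4cos²(jπ/(n+1))) for j = 1,...,⌊n/2⌋ — equivalently, B_n(1/(4cos²θ)) = 0 iff θ = jπ/(n+1); formally: B_n(t) = ∏_{j=1}^{⌊n/2⌋} (1 - 4 cos²(jπ/(n+1))·t). -/

import Mathlib

open Real

/-- The polynomials `B_0 = B_1 = 1`, `B_k = B_{k-1} - t B_{k-2}`. -/
noncomputable def Bpoly : ℕ → ℝ → ℝ
  | 0, _ => 1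
  | 1, _ => 1
  | (k + 2), t => Bpoly (k + 1) t - t * Bpoly k t

private lemma Bpoly_mul_sub (t : ℝ) (α β : ℂ) (hs : α + β = 1) (hp : α * β = (t : ℂ)) :
    ∀ k, (Bpoly k t : ℂ) * (α - β) = α ^ (k + 1) - β ^ (k + 1) := by
  have key : ∀ k, (Bpoly k t : ℂ) * (α - β) = α ^ (k + 1) - β ^ (k + 1) ∧
      (Bpoly (k + 1) t : ℂ) * (α - β) = α ^ (k + 2) - β ^ (k + 2) := by
    intro k
    induction k with
    | zero =>
      refine ⟨by simp [Bpoly], ?_⟩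
      show (Bpoly 1 t : ℂ) * (α - β) = _
      simp only [Bpoly, Complex.ofReal_one, one_mul]
      linear_combination (β - α) * hs
    | succ k ih =>
      refine ⟨ih.2, ?_⟩
      show (Bpoly (k + 2) t : ℂ) * (α - β) = _
      rw [show Bpoly (k + 2) t = Bpoly (k + 1) t - t * Bpoly k t from rfl]
      push_cast
      rw [← hp]
      linear_combination ih.2 - α * β * ih.1 - (α ^ (k + 2) - β ^ (k + 2)) * hs
  exact fun k => (key k).1

/-- Polynomial version of `Bpoly`. -/
noncomputable def BP : ℕ → Polynomial ℝ
  | 0 => 1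
  | 1 => 1
  | (k + 2) => BP (k + 1) - Polynomial.X * BP k

private lemma BP_eval (t : ℝ) : ∀ k, (BP k).eval t = Bpoly k t := by
  have key : ∀ k, (BP k).eval t = Bpoly k t ∧ (BP (k + 1)).eval t = Bpoly (k + 1) t := by
    intro k
    induction k with
    | zero => exact ⟨by simp [BP, Bpoly], by simp [BP, Bpoly]⟩
    | succ k ih =>
      refine ⟨ih.2, ?_⟩
      show (BP (k + 2)).eval t = Bpoly (k + 2) t
      rw [show BP (k + 2) = BP (k + 1) - Polynomial.X * BP k from rfl,
        show Bpoly (k + 2) t = Bpoly (k + 1) t - t * Bpoly k t from rfl]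
      simp [ih.1, ih.2]
  exact fun k => (key k).1

private lemma Bpoly_eval_neg (n : ℕ) (hn : 1 < n) (t : ℝ) (ht : t < 0) :
    Bpoly n t = ∏ j ∈ Finset.Icc 1 (n / 2), (1 - 4 * Real.cos (j * π / (n + 1)) ^ 2 * t) := by
  set N := n + 1 with hN
  have hN0 : (N : ℕ) ≠ 0 := by omega
  -- the roots of x^2 - x + t
  have h4t : (0:ℝ) < 1 - 4 * t := by linarith
  set s : ℝ := Real.sqrt (1 - 4 * t) with hsdef
  have hssq : s ^ 2 = 1 - 4 * t := Real.sq_sqrt h4t.le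
  have hs1 : 1 < s := by nlinarith [Real.sqrt_nonneg (1 - 4 * t), hssq]
  set α : ℂ := (((1 + s) / 2 : ℝ) : ℂ) with hαdef
  set β : ℂ := (((1 - s) / 2 : ℝ) : ℂ) with hβdef
  have hsum : α + β = 1 := by rw [hαdef, hβdef]; push_cast; ring
  have hcs : ((s:ℂ)) ^ 2 = 1 - 4 * (t:ℂ) := by
    rw [← Complex.ofReal_pow, hssq]; push_cast; ring
  have hprod : α * β = (t : ℂ) := by
    rw [hαdef, hβdef]; push_cast
    linear_combination (-1/4 : ℂ) * hcs
  have hαβ : α - β = (s : ℂ) := by rw [hαdef, hβdef]; push_cast; ring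
  have hαβ0 : α - β ≠ 0 := by
    rw [hαβ]; exact Complex.ofReal_ne_zero.mpr (by linarith)
  have hβ0 : β ≠ 0 := by
    rw [hβdef]
    exact Complex.ofReal_ne_zero.mpr (by intro h; nlinarith)
  -- primitive root of unity
  set ω : ℂ := Complex.exp (2 * π * Complex.I / N) with hωdef
  have hprim : IsPrimitiveRoot ω N := Complex.isPrimitiveRoot_exp N hN0
  -- key product formula
  have hNpos : 0 < N := by omega
  have key : α ^ N - β ^ N = ∏ j ∈ Finset.range N, (α - ω ^ j * β) := by
    have hpoly := X_pow_sub_C_eq_prod hprim hNpos (one_pow N)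
    have h1 : (α / β) ^ N - 1 = ∏ j ∈ Finset.range N, (α / β - ω ^ j) := by
      have := congrArg (Polynomial.eval (α / β)) hpoly
      simpa [Polynomial.eval_prod] using this
    have h2 : α ^ N - β ^ N = β ^ N * ((α / β) ^ N - 1) := by
      rw [div_pow, mul_sub, mul_one, mul_div_assoc', mul_div_right_comm,
        div_self (pow_ne_zero N hβ0), one_mul]
    rw [h2, h1, show (β : ℂ) ^ N = ∏ _j ∈ Finset.range N, β from by
      rw [Finset.prod_const, Finset.card_range], ← Finset.prod_mul_distrib]
    refine Finset.prod_congr rfl fun j _ => ?_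
    field_simp
  -- split off the j = 0 factor
  have hrange : Finset.range N = insert 0 (Finset.Icc 1 n) := by
    ext j
    simp only [Finset.mem_range, Finset.mem_insert, Finset.mem_Icc]
    omega
  have key2 : (Bpoly n t : ℂ) * (α - β) = (α - β) * ∏ j ∈ Finset.Icc 1 n, (α - ω ^ j * β) := by
    rw [Bpoly_mul_sub t α β hsum hprod n, show n + 1 = N from rfl, key, hrange,
      Finset.prod_insert (by simp)]
    simp
  have key3 : (Bpoly n t : ℂ) = ∏ j ∈ Finset.Icc 1 n, (α - ω ^ j * β) := by
    have := key2
    rw [mul_comm (α - β) _] at this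
    exact mul_right_cancel₀ hαβ0 this
  -- pairing
  have hωpow : ∀ j : ℕ, ω ^ j = Complex.exp ((2 * π * j / N : ℝ) * Complex.I) := by
    intro j
    rw [hωdef, ← Complex.exp_nat_mul]
    congr 1
    push_cast
    ring
  have hpair : ∀ j ∈ Finset.Icc 1 (n / 2),
      (α - ω ^ j * β) * (α - ω ^ (N - j) * β)
        = ((1 - 4 * Real.cos (j * π / (n + 1)) ^ 2 * t : ℝ) : ℂ) := by
    intro j hj
    simp only [Finset.mem_Icc] at hj
    have hjN : j ≤ N := by omega
    have hne : ((n : ℝ) + 1) ≠ 0 := by positivity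
    have hP : ω ^ j * ω ^ (N - j) = 1 := by
      rw [← pow_add, show j + (N - j) = N from by omega, hprim.pow_eq_one]
    have hj1 : ω ^ j = Complex.exp (((2 * ((j : ℝ) * π / (n + 1)) : ℝ) : ℂ) * Complex.I) := by
      rw [hωpow j]
      congr 2
      push_cast [hN]
      ring
    have hj2 : ω ^ (N - j)
        = Complex.exp (((-(2 * ((j : ℝ) * π / (n + 1))) : ℝ) : ℂ) * Complex.I) := by
      rw [hωpow (N - j)]
      rw [show ((2 * π * ((N - j : ℕ) : ℝ) / N : ℝ))
          = 2 * π + (-(2 * ((j : ℝ) * π / (n + 1)))) from by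
        rw [Nat.cast_sub hjN]
        push_cast [hN]
        field_simp
        ring]
      rw [Complex.ofReal_add, add_mul, Complex.exp_add,
        show ((2 * π : ℝ) : ℂ) * Complex.I = 2 * ↑π * Complex.I from by push_cast; ring,
        Complex.exp_two_pi_mul_I, one_mul]
    have hS : ω ^ j + ω ^ (N - j)
        = ((2 * (2 * Real.cos ((j : ℝ) * π / (n + 1)) ^ 2 - 1) : ℝ) : ℂ) := by
      rw [hj1, hj2, Complex.exp_mul_I, Complex.exp_mul_I,
        ← Complex.ofReal_cos, ← Complex.ofReal_sin,
        ← Complex.ofReal_cos, ← Complex.ofReal_sin,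
        Real.cos_neg, Real.sin_neg, Real.cos_two_mul]
      push_cast
      ring
    have expand : (α - ω ^ j * β) * (α - ω ^ (N - j) * β)
        = α ^ 2 - (ω ^ j + ω ^ (N - j)) * (α * β) + (ω ^ j * ω ^ (N - j)) * β ^ 2 := by
      ring
    rw [expand, hS, hP, hprod]
    push_cast
    linear_combination (α + β + 1) * hsum - 2 * hprod
  -- now split the product according to parity
  rcases Nat.even_or_odd n with ⟨m, hm⟩ | ⟨m, hm⟩
  · -- n even
    have hm2 : n / 2 = m := by omega
    have hsplit : Finset.Icc 1 n
        = Finset.Icc 1 m ∪ (Finset.Icc 1 m).image (fun j => N - j) := by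
      ext j
      simp only [Finset.mem_union, Finset.mem_Icc, Finset.mem_image]
      constructor
      · intro hj
        by_cases h : j ≤ m
        · exact Or.inl ⟨hj.1, h⟩
        · exact Or.inr ⟨N - j, by omega, by omega⟩
      · rintro (⟨h1, h2⟩ | ⟨a, ⟨ha1, ha2⟩, rfl⟩) <;> omega
    have hdisj : Disjoint (Finset.Icc 1 m) ((Finset.Icc 1 m).image (fun j => N - j)) := by
      rw [Finset.disjoint_left]
      intro j hj hj2
      simp only [Finset.mem_Icc] at hj
      simp only [Finset.mem_image, Finset.mem_Icc] at hj2
      obtain ⟨a, ⟨ha1, ha2⟩, rfl⟩ := hj2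
      omega
    have hinj : ∀ x ∈ Finset.Icc 1 m, ∀ y ∈ Finset.Icc 1 m,
        N - x = N - y → x = y := by
      intro a ha b hb hab
      simp only [Finset.mem_Icc] at ha hb
      omega
    have e1 : ∏ j ∈ Finset.Icc 1 n, (α - ω ^ j * β)
        = ∏ j ∈ Finset.Icc 1 m, ((α - ω ^ j * β) * (α - ω ^ (N - j) * β)) := by
      rw [hsplit, Finset.prod_union hdisj, Finset.prod_image hinj,
        ← Finset.prod_mul_distrib]
    have e2 : ∏ j ∈ Finset.Icc 1 m, ((α - ω ^ j * β) * (α - ω ^ (N - j) * β))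
        = ((∏ j ∈ Finset.Icc 1 m, (1 - 4 * Real.cos (j * π / (n + 1)) ^ 2 * t) : ℝ) : ℂ) := by
      rw [Complex.ofReal_prod]
      exact Finset.prod_congr rfl fun j hj => hpair j (by rwa [hm2])
    have := key3.trans (e1.trans e2)
    rw [hm2]
    exact_mod_cast this
  · -- n odd
    have hm2 : n / 2 = m := by omega
    have hmid : ω ^ (m + 1) = -1 := by
      have h1 : ω ^ (m + 1) = Complex.exp (((π : ℝ) : ℂ) * Complex.I) := by
        rw [hωpow (m + 1)]
        congr 2
        have hN2 : ((N : ℕ) : ℝ) = 2 * ((m : ℝ) + 1) := by push_cast [hN, hm]; ring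
        rw [hN2]
        have hne : ((m : ℝ) + 1) ≠ 0 := by positivity
        have hm1 : ((m + 1 : ℕ) : ℝ) = (m : ℝ) + 1 := by push_cast; ring
        rw [hm1, show (2:ℝ) * π * ((m:ℝ) + 1) = π * (2 * ((m:ℝ) + 1)) from by ring,
          mul_div_assoc, div_self (by positivity), mul_one]
      rw [h1]
      exact_mod_cast Complex.exp_pi_mul_I
    have hmidf : α - ω ^ (m + 1) * β = 1 := by
      rw [hmid]; linear_combination hsum
    have hsplit : Finset.Icc 1 n
        = insert (m + 1) (Finset.Icc 1 m ∪ (Finset.Icc 1 m).image (fun j => N - j)) := by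
      ext j
      simp only [Finset.mem_insert, Finset.mem_union, Finset.mem_Icc, Finset.mem_image]
      constructor
      · intro hj
        by_cases h : j = m + 1
        · exact Or.inl h
        · by_cases h2 : j ≤ m
          · exact Or.inr (Or.inl ⟨hj.1, h2⟩)
          · exact Or.inr (Or.inr ⟨N - j, by omega, by omega⟩)
      · rintro (rfl | ⟨h1, h2⟩ | ⟨a, ⟨ha1, ha2⟩, rfl⟩) <;> omega
    have hnotmem : (m + 1) ∉ Finset.Icc 1 m ∪ (Finset.Icc 1 m).image (fun j => N - j) := by
      simp only [Finset.mem_union, Finset.mem_Icc, Finset.mem_image, not_or]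
      refine ⟨by omega, ?_⟩
      rintro ⟨a, ⟨ha1, ha2⟩, hab⟩
      omega
    have hdisj : Disjoint (Finset.Icc 1 m) ((Finset.Icc 1 m).image (fun j => N - j)) := by
      rw [Finset.disjoint_left]
      intro j hj hj2
      simp only [Finset.mem_Icc] at hj
      simp only [Finset.mem_image, Finset.mem_Icc] at hj2
      obtain ⟨a, ⟨ha1, ha2⟩, rfl⟩ := hj2
      omega
    have hinj : ∀ x ∈ Finset.Icc 1 m, ∀ y ∈ Finset.Icc 1 m,
        N - x = N - y → x = y := by
      intro a ha b hb hab
      simp only [Finset.mem_Icc] at ha hb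
      omega
    have e1 : ∏ j ∈ Finset.Icc 1 n, (α - ω ^ j * β)
        = ∏ j ∈ Finset.Icc 1 m, ((α - ω ^ j * β) * (α - ω ^ (N - j) * β)) := by
      rw [hsplit, Finset.prod_insert hnotmem, hmidf, one_mul,
        Finset.prod_union hdisj, Finset.prod_image hinj, ← Finset.prod_mul_distrib]
    have e2 : ∏ j ∈ Finset.Icc 1 m, ((α - ω ^ j * β) * (α - ω ^ (N - j) * β))
        = ((∏ j ∈ Finset.Icc 1 m, (1 - 4 * Real.cos (j * π / (n + 1)) ^ 2 * t) : ℝ) : ℂ) := by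
      rw [Complex.ofReal_prod]
      exact Finset.prod_congr rfl fun j hj => hpair j (by rwa [hm2])
    have := key3.trans (e1.trans e2)
    rw [hm2]
    exact_mod_cast this

theorem Bpoly_roots (n : ℕ) (hn : 1 < n) (t : ℝ) :
    Bpoly n t = ∏ j ∈ Finset.Icc 1 (n / 2), (1 - 4 * Real.cos (j * π / (n + 1)) ^ 2 * t) := by
  have hpoly : BP n = ∏ j ∈ Finset.Icc 1 (n / 2),
      (1 - Polynomial.C (4 * Real.cos (j * π / (n + 1)) ^ 2) * Polynomial.X) := by
    apply Polynomial.eq_of_infinite_eval_eq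
    apply Set.Infinite.mono (s := Set.Iio (0 : ℝ))
    · intro x hx
      simp only [Set.mem_Iio] at hx
      simp only [Set.mem_setOf_eq]
      rw [BP_eval, Bpoly_eval_neg n hn x hx, Polynomial.eval_prod]
      refine Finset.prod_congr rfl fun j _ => ?_
      simp [mul_comm]
    · exact Set.Iio_infinite 0
  have := congrArg (Polynomial.eval t) hpoly
  rw [BP_eval, Polynomial.eval_prod] at this
  rw [this]
  refine Finset.prod_congr rfl fun j _ => ?_
  simp [mul_comm]
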